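/- (Super- /sub-resolution error bound for GFN-ROM) Suppose: (i) for all i ∈ M_o and j ∈ M_n with i ← j or i → j, |u(x_i) − u(x_j)| ≤ δ; and (ii) for all i ∈ M_o, |u(x_i) − d_i| ≤ τ, where d ∈ ℝ^{N_o} is the decoder output on M_o (d_k = Σ_j W^d_{k j} z_j + b^d_k with z = map(μ)). Then for all i ∈ M_n, |u(x_i) − d̃_i| ≤ τ + δ, where d̃_i = Σ_j W̃^d_{i j} z_j + b̃^d_i with W̃^d_{i j} = mean_{k: k↮ i} W^d_{k j} and b̃^d_i = mean_{k: k↮ i} b^d_k. -/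
import Mathlib


open Finset
open scoped Classical

/-- `k` is the unique nearest neighbour of `x` among the points of the mesh `M`. -/
def IsNN {X : Type*} [MetricSpace X] (M : Finset X) (x k : X) : Prop :=
  k ∈ M ∧ ∀ m ∈ M, m ≠ k → dist x k < dist x m

/-- Super- and sub-resolution error bound for GFN-ROM: if nearest-neighbour pairs of
nodes have solution values within `δ` and the decoder is `τ`-accurate on `Mo`,
then the GFN-transformed decoder is `(τ + δ)`-accurate on `Mn`. -/
theorem gfn_rom_error_bound {X : Type*} [MetricSpace X] (Mo Mn : Finset X)
    (nnO nnN : X → X)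
    (hO : ∀ j ∈ Mn, IsNN Mo j (nnO j))
    (hN : ∀ i ∈ Mo, IsNN Mn i (nnN i))
    {L : ℕ} (Wd : X → Fin L → ℝ) (bd : X → ℝ) (z : Fin L → ℝ)
    (u : X → ℝ) (δ τ : ℝ) (hδ : 0 ≤ δ) (hτ : 0 ≤ τ)
    (hcross : ∀ i ∈ Mo, ∀ j ∈ Mn, (nnO j = i ∨ nnN i = j) → |u i - u j| ≤ δ)
    (hdec : ∀ k ∈ Mo, |u k - (∑ l : Fin L, Wd k l * z l + bd k)| ≤ τ) :
    ∀ i ∈ Mn,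
      |u i - (∑ l : Fin L,
          ((∑ k ∈ Mo.filter (fun k => nnO i = k ∨ nnN k = i), Wd k l) /
            ((Mo.filter (fun k => nnO i = k ∨ nnN k = i)).card : ℝ)) * z l
        + (∑ k ∈ Mo.filter (fun k => nnO i = k ∨ nnN k = i), bd k) /
            ((Mo.filter (fun k => nnO i = k ∨ nnN k = i)).card : ℝ))| ≤ τ + δ := by
  intro i hi
  set S := Mo.filter (fun k => nnO i = k ∨ nnN k = i) with hS
  have hmem : nnO i ∈ S := by
    rw [hS, mem_filter]
    exact ⟨(hO i hi).1, Or.inl rfl⟩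
  have hcardpos : 0 < (S.card : ℝ) := by
    have : 0 < S.card := card_pos.mpr ⟨_, hmem⟩
    exact_mod_cast this
  have hn : (S.card : ℝ) ≠ 0 := ne_of_gt hcardpos
  -- rewrite the averaged decoder as an average of decoder values
  have key : (∑ l : Fin L, ((∑ k ∈ S, Wd k l) / (S.card : ℝ)) * z l
        + (∑ k ∈ S, bd k) / (S.card : ℝ))
      = (∑ k ∈ S, (∑ l : Fin L, Wd k l * z l + bd k)) / (S.card : ℝ) := by
    rw [Finset.sum_add_distrib, add_div]
    congr 1
    simp only [div_mul_eq_mul_div, Finset.sum_mul, Finset.sum_div]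
    exact Finset.sum_comm
  rw [key]
  have hui : u i = (∑ _k ∈ S, u i) / (S.card : ℝ) := by
    rw [Finset.sum_const, nsmul_eq_mul, mul_div_cancel_left₀ _ hn]
  rw [show u i - (∑ k ∈ S, (∑ l : Fin L, Wd k l * z l + bd k)) / (S.card : ℝ)
      = (∑ k ∈ S, (u i - (∑ l : Fin L, Wd k l * z l + bd k))) / (S.card : ℝ) by
    rw [Finset.sum_sub_distrib, sub_div, ← hui]]
  rw [abs_div, abs_of_pos hcardpos, div_le_iff₀ hcardpos]
  calc |∑ k ∈ S, (u i - (∑ l : Fin L, Wd k l * z l + bd k))|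
      ≤ ∑ k ∈ S, |u i - (∑ l : Fin L, Wd k l * z l + bd k)| :=
        Finset.abs_sum_le_sum_abs _ _
    _ ≤ ∑ _k ∈ S, (τ + δ) := by
        apply Finset.sum_le_sum
        intro k hk
        rw [hS, mem_filter] at hk
        have h1 : |u k - u i| ≤ δ := hcross k hk.1 i hi hk.2
        have h2 : |u k - (∑ l : Fin L, Wd k l * z l + bd k)| ≤ τ := hdec k hk.1
        calc |u i - (∑ l : Fin L, Wd k l * z l + bd k)|
            = |(u i - u k) + (u k - (∑ l : Fin L, Wd k l * z l + bd k))| := by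
              ring_nf
          _ ≤ |u i - u k| + |u k - (∑ l : Fin L, Wd k l * z l + bd k)| := abs_add_le _ _
          _ ≤ δ + τ := add_le_add (by rwa [abs_sub_comm]) h2
          _ = τ + δ := add_comm _ _
    _ = (τ + δ) * (S.card : ℝ) := by rw [Finset.sum_const, nsmul_eq_mul, mul_comm]
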